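/- Let (X,φ) be an expansive dynamical system, x ∈ X, and p a synchronizing periodic point. If lim_{n→∞} d(φⁿ(x),φⁿ(p)) = 0 (stable equivalence), then x is synchronizing. The same conclusion holds if x is unstably equivalent, homoclinic, or locally conjugate to p. -/

import Mathlib

open Filter Topology Set

namespace Paper

set_option linter.unusedSectionVars false

variable {X : Type*} [MetricSpace X] [CompactSpace X]

/-- The `n`-th iterate (for `n : ℤ`) of the homeomorphism `φ`. -/
def It (φ : X ≃ₜ X) (n : ℤ) : X → X := fun x => (φ.toEquiv ^ n) x

/-- The local stable set `Xˢ(x, ε)`. -/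
def locS (φ : X ≃ₜ X) (x : X) (ε : ℝ) : Set X :=
  {y | ∀ n : ℕ, dist (It φ n x) (It φ n y) ≤ ε}

/-- The local unstable set `Xᵘ(x, ε)`. -/
def locU (φ : X ≃ₜ X) (x : X) (ε : ℝ) : Set X :=
  {y | ∀ n : ℕ, dist (It φ (-(n : ℤ)) x) (It φ (-(n : ℤ)) y) ≤ ε}

/-- The set `D_ε` on which the bracket is defined. -/
def Dset (φ : X ≃ₜ X) (ε : ℝ) : Set (X × X) :=
  {p | (locS φ p.1 ε ∩ locU φ p.2 ε).Nonempty}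

/-- `(X, φ)` is expansive with expansiveness constant `εX`. -/
def IsExpansive (φ : X ≃ₜ X) (εX : ℝ) : Prop :=
  0 < εX ∧ ∀ x y : X, (∀ n : ℤ, dist (It φ n x) (It φ n y) ≤ εX) → x = y

/-- The metric is adapted (Fried), with constants `η` and `lam`. -/
def IsAdapted (φ : X ≃ₜ X) (η lam : ℝ) : Prop :=
  0 < η ∧ 0 < lam ∧ lam < 1 ∧
    (∀ x y : X, y ∈ locS φ x η → dist (φ x) (φ y) ≤ lam * dist x y) ∧
    (∀ x y : X, y ∈ locU φ x η → dist (φ.symm x) (φ.symm y) ≤ lam * dist x y)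

/-- `p` is a periodic point of `φ`. -/
def IsPeriodic (φ : X ≃ₜ X) (p : X) : Prop :=
  ∃ n : ℕ, 1 ≤ n ∧ It φ n p = p

/-- `x` is a synchronizing point: `(x, x)` is in the interior of `D_ε` for
some `0 < ε ≤ ε₀`. -/
def IsSyncPt (φ : X ≃ₜ X) (ε₀ : ℝ) (x : X) : Prop :=
  ∃ ε : ℝ, 0 < ε ∧ ε ≤ ε₀ ∧ (x, x) ∈ interior (Dset φ ε)

/-- `(X, φ)` is irreducible. -/
def Irred (φ : X ≃ₜ X) : Prop :=
  ∀ U V : Set X, IsOpen U → IsOpen V → U.Nonempty → V.Nonempty →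
    ∃ n : ℕ, 0 < n ∧ (It φ n '' U ∩ V).Nonempty

/-- `(X, φ)` is mixing. -/
def Mixing (φ : X ≃ₜ X) : Prop :=
  ∀ U V : Set X, IsOpen U → IsOpen V → U.Nonempty → V.Nonempty →
    ∃ N : ℕ, ∀ n : ℕ, N ≤ n → (It φ n '' U ∩ V).Nonempty

/-- Every point of `(X, φ)` is non-wandering. -/
def NonWandering (φ : X ≃ₜ X) : Prop :=
  ∀ x : X, ∀ U ∈ 𝓝 x, ∃ n : ℕ, 0 < n ∧ (It φ n '' U ∩ U).Nonempty

/-- Stable equivalence `x ∼ₛ y`. -/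
def StableEq (φ : X ≃ₜ X) (x y : X) : Prop :=
  Tendsto (fun n : ℕ => dist (It φ n x) (It φ n y)) atTop (𝓝 0)

/-- Unstable equivalence `x ∼ᵤ y`. -/
def UnstableEq (φ : X ≃ₜ X) (x y : X) : Prop :=
  Tendsto (fun n : ℕ => dist (It φ (-(n : ℤ)) x) (It φ (-(n : ℤ)) y)) atTop (𝓝 0)

/-- Local conjugacy `x ∼_lc y`: a homeomorphism `γ : U → V` of open
neighborhoods with `γ x = y` and `sup_{z ∈ U} d(φⁿ z, φⁿ (γ z)) → 0` as
`n → ±∞`. -/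
def LocConj (φ : X ≃ₜ X) (x y : X) : Prop :=
  ∃ (U V : Set X) (γ γinv : X → X),
    IsOpen U ∧ IsOpen V ∧ x ∈ U ∧ y ∈ V ∧ γ x = y ∧
    Set.MapsTo γ U V ∧ Set.MapsTo γinv V U ∧
    (∀ z ∈ U, γinv (γ z) = z) ∧ (∀ w ∈ V, γ (γinv w) = w) ∧
    ContinuousOn γ U ∧ ContinuousOn γinv V ∧
    (∀ ε : ℝ, 0 < ε → ∃ N : ℕ, ∀ n : ℤ, (N : ℤ) ≤ |n| → ∀ z ∈ U,
      dist (It φ n z) (It φ n (γ z)) ≤ ε)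

/-- Stable local conjugacy `x ∼_lcs y`: a homeomorphism of `Xᵘ(x, δ)` onto
its image in `Xᵘ(y, δ')` sending `x` to `y`, uniformly asymptotic in forward
time. -/
def StableLC (φ : X ≃ₜ X) (x y : X) : Prop :=
  ∃ (δ δ' : ℝ) (γ : X → X), 0 < δ ∧ 0 < δ' ∧
    Set.MapsTo γ (locU φ x δ) (locU φ y δ') ∧
    Set.InjOn γ (locU φ x δ) ∧ ContinuousOn γ (locU φ x δ) ∧ γ x = y ∧
    (∀ ε : ℝ, 0 < ε → ∃ N : ℕ, ∀ n : ℕ, N ≤ n → ∀ z ∈ locU φ x δ,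
      dist (It φ n z) (It φ n (γ z)) ≤ ε)

/-- Unstable local conjugacy `x ∼_lcu y`: a homeomorphism of `Xˢ(x, δ)` onto
its image in `Xˢ(y, δ')` sending `x` to `y`, uniformly asymptotic in backward
time. -/
def UnstableLC (φ : X ≃ₜ X) (x y : X) : Prop :=
  ∃ (δ δ' : ℝ) (γ : X → X), 0 < δ ∧ 0 < δ' ∧
    Set.MapsTo γ (locS φ x δ) (locS φ y δ') ∧
    Set.InjOn γ (locS φ x δ) ∧ ContinuousOn γ (locS φ x δ) ∧ γ x = y ∧
    (∀ ε : ℝ, 0 < ε → ∃ N : ℕ, ∀ n : ℕ, N ≤ n → ∀ z ∈ locS φ x δ,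
      dist (It φ (-(n : ℤ)) z) (It φ (-(n : ℤ)) (γ z)) ≤ ε)

lemma It_add (φ : X ≃ₜ X) (m n : ℤ) (x : X) : It φ (m + n) x = It φ m (It φ n x) := by
  simp [It, zpow_add, Equiv.Perm.mul_apply]

lemma It_zero (φ : X ≃ₜ X) (x : X) : It φ 0 x = x := rfl
lemma It_one (φ : X ≃ₜ X) (x : X) : It φ 1 x = φ x := by simp [It]
lemma It_neg_one (φ : X ≃ₜ X) (x : X) : It φ (-1) x = φ.symm x := by
  simp [It, Equiv.Perm.inv_def]

lemma It_continuous (φ : X ≃ₜ X) (n : ℤ) : Continuous (It φ n) := by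
  induction n using Int.induction_on with
  | zero => exact continuous_id
  | succ k ih =>
      have h : It φ ((k:ℤ) + 1) = φ ∘ It φ k := funext fun x => by
        rw [add_comm, It_add, It_one]; rfl
      rw [h]; exact φ.continuous.comp ih
  | pred k ih =>
      have h : It φ (-(k:ℤ) - 1) = φ.symm ∘ It φ (-(k:ℤ)) := funext fun x => by
        rw [show (-(k:ℤ) - 1) = -1 + -(k:ℤ) by ring, It_add, It_neg_one]; rfl
      rw [h]; exact φ.symm.continuous.comp ih

lemma locS_mono (φ : X ≃ₜ X) (a : X) {ε ε' : ℝ} (h : ε ≤ ε') : locS φ a ε ⊆ locS φ a ε' :=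
  fun _ hw n => (hw n).trans h
lemma locU_mono (φ : X ≃ₜ X) (a : X) {ε ε' : ℝ} (h : ε ≤ ε') : locU φ a ε ⊆ locU φ a ε' :=
  fun _ hw n => (hw n).trans h

lemma dist_le_of_locS (φ : X ≃ₜ X) {a w : X} {ε : ℝ} (h : w ∈ locS φ a ε) : dist a w ≤ ε := by
  simpa [It_zero] using h 0
lemma dist_le_of_locU (φ : X ≃ₜ X) {a w : X} {ε : ℝ} (h : w ∈ locU φ a ε) : dist a w ≤ ε := by
  simpa [It_zero] using h 0

/-- Backward pullback of the bracket set, near the diagonal. -/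
lemma Dset_pullback (φ : X ≃ₜ X) {η lam : ℝ} (had : IsAdapted φ η lam) {ε : ℝ}
    (hεη : ε ≤ η) {a b : X} (h : (a, b) ∈ Dset φ ε)
    (hd : dist (φ.symm a) (φ.symm b) ≤ (1 - lam) * ε) :
    (φ.symm a, φ.symm b) ∈ Dset φ ε := by
  obtain ⟨w, hS, hU⟩ := h
  refine ⟨φ.symm w, ?_, ?_⟩
  · intro n
    match n with
    | 0 =>
      have h1 : dist (φ.symm b) (φ.symm w) ≤ lam * dist b w :=
        had.2.2.2.2 b w (locU_mono φ b hεη hU)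
      have h2 : dist b w ≤ ε := dist_le_of_locU φ hU
      have h3 : dist (φ.symm a) (φ.symm w) ≤ dist (φ.symm a) (φ.symm b) + dist (φ.symm b) (φ.symm w) :=
        dist_triangle _ _ _
      have hlam : 0 < lam := had.2.1
      simp only [It_zero, Nat.cast_zero]
      calc dist (It φ 0 (φ.symm a)) (It φ 0 (φ.symm w)) = dist (φ.symm a) (φ.symm w) := by
            rw [It_zero, It_zero]
        _ ≤ (1 - lam) * ε + lam * dist b w := by linarith
        _ ≤ (1 - lam) * ε + lam * ε := by nlinarith
        _ = ε := by ring
    | (k+1) =>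
      have e1 : It φ ((k:ℤ)+1) (φ.symm a) = It φ k a := by
        rw [show ((k:ℤ)+1) = (k:ℤ) + 1 from rfl, It_add, It_one, Homeomorph.apply_symm_apply]
      have e2 : It φ ((k:ℤ)+1) (φ.symm w) = It φ k w := by
        rw [It_add, It_one, Homeomorph.apply_symm_apply]
      have := hS k
      calc dist (It φ ((k+1:ℕ):ℤ) (φ.symm a)) (It φ ((k+1:ℕ):ℤ) (φ.symm w))
          = dist (It φ k a) (It φ k w) := by push_cast; rw [e1, e2]
        _ ≤ ε := this
  · intro n
    have e1 : ∀ c : X, It φ (-(n:ℤ)) (φ.symm c) = It φ (-((n+1:ℕ):ℤ)) c := fun c => by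
      push_cast
      rw [show (-((n:ℤ)+1)) = (-(n:ℤ)) + -1 by ring, It_add, It_neg_one]
    rw [e1, e1]; exact hU (n+1)

/-- Forward pushforward of the bracket set, near the diagonal. -/
lemma Dset_pushforward (φ : X ≃ₜ X) {η lam : ℝ} (had : IsAdapted φ η lam) {ε : ℝ}
    (hεη : ε ≤ η) {a b : X} (h : (a, b) ∈ Dset φ ε)
    (hd : dist (φ a) (φ b) ≤ (1 - lam) * ε) :
    (φ a, φ b) ∈ Dset φ ε := by
  obtain ⟨w, hS, hU⟩ := h
  refine ⟨φ w, ?_, ?_⟩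
  · intro n
    have e1 : It φ (n:ℤ) (φ a) = It φ ((n+1:ℕ):ℤ) a := by
      push_cast; rw [It_add, It_one]
    have e2 : It φ (n:ℤ) (φ w) = It φ ((n+1:ℕ):ℤ) w := by
      push_cast; rw [It_add, It_one]
    rw [e1, e2]; exact hS (n+1)
  · intro n
    match n with
    | 0 =>
      have h1 : dist (φ a) (φ w) ≤ lam * dist a w :=
        had.2.2.2.1 a w (locS_mono φ a hεη hS)
      have h2 : dist a w ≤ ε := dist_le_of_locS φ hS
      have h3 : dist (φ b) (φ w) ≤ dist (φ b) (φ a) + dist (φ a) (φ w) := dist_triangle _ _ _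
      have hlam : 0 < lam := had.2.1
      calc dist (It φ (-((0:ℕ):ℤ)) (φ b)) (It φ (-((0:ℕ):ℤ)) (φ w)) = dist (φ b) (φ w) := by
            norm_num [It_zero]
        _ ≤ (1 - lam) * ε + lam * ε := by rw [dist_comm (φ b) (φ a)] at h3; nlinarith
        _ = ε := by ring
    | (k+1) =>
      have e1 : ∀ c : X, It φ (-((k+1:ℕ):ℤ)) (φ c) = It φ (-(k:ℤ)) c := fun c => by
        push_cast
        rw [show (-((k:ℤ)+1)) = (-(k:ℤ)) + -1 by ring, It_add, It_neg_one,
          Homeomorph.symm_apply_apply]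
      rw [e1, e1]; exact hU k
lemma interior_pullback (φ : X ≃ₜ X) {η lam ε : ℝ} (had : IsAdapted φ η lam)
    (hε : 0 < ε) (hεη : ε ≤ η) {y : X} (h : (y, y) ∈ interior (Dset φ ε)) :
    (φ.symm y, φ.symm y) ∈ interior (Dset φ ε) := by
  set W : Set (X × X) :=
    ((fun q : X × X => (φ q.1, φ q.2)) ⁻¹' interior (Dset φ ε)) ∩
      {q : X × X | dist q.1 q.2 < (1 - lam) * ε} with hW
  have hWopen : IsOpen W := by
    refine IsOpen.inter (isOpen_interior.preimage ?_) ?_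
    · exact (φ.continuous.comp continuous_fst).prodMk (φ.continuous.comp continuous_snd)
    · exact isOpen_lt (continuous_fst.dist continuous_snd) continuous_const
  have hWsub : W ⊆ Dset φ ε := by
    rintro ⟨a, b⟩ ⟨h1, h2⟩
    have h1' : (φ a, φ b) ∈ Dset φ ε := interior_subset h1
    have := Dset_pullback φ had hεη h1' (by
      rw [Homeomorph.symm_apply_apply, Homeomorph.symm_apply_apply]
      exact le_of_lt h2)
    simpa using this
  have hmem : (φ.symm y, φ.symm y) ∈ W := by
    constructor
    · show (φ (φ.symm y), φ (φ.symm y)) ∈ interior (Dset φ ε)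
      rwa [Homeomorph.apply_symm_apply]
    · show dist (φ.symm y) (φ.symm y) < (1 - lam) * ε
      rw [dist_self]
      have : lam < 1 := had.2.2.1
      nlinarith
  exact interior_maximal hWsub hWopen hmem

lemma interior_pushforward (φ : X ≃ₜ X) {η lam ε : ℝ} (had : IsAdapted φ η lam)
    (hε : 0 < ε) (hεη : ε ≤ η) {y : X} (h : (y, y) ∈ interior (Dset φ ε)) :
    (φ y, φ y) ∈ interior (Dset φ ε) := by
  set W : Set (X × X) :=
    ((fun q : X × X => (φ.symm q.1, φ.symm q.2)) ⁻¹' interior (Dset φ ε)) ∩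
      {q : X × X | dist q.1 q.2 < (1 - lam) * ε} with hW
  have hWopen : IsOpen W := by
    refine IsOpen.inter (isOpen_interior.preimage ?_) ?_
    · exact (φ.symm.continuous.comp continuous_fst).prodMk (φ.symm.continuous.comp continuous_snd)
    · exact isOpen_lt (continuous_fst.dist continuous_snd) continuous_const
  have hWsub : W ⊆ Dset φ ε := by
    rintro ⟨a, b⟩ ⟨h1, h2⟩
    have h1' : (φ.symm a, φ.symm b) ∈ Dset φ ε := interior_subset h1
    have := Dset_pushforward φ had hεη h1' (by
      rw [Homeomorph.apply_symm_apply, Homeomorph.apply_symm_apply]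
      exact le_of_lt h2)
    simpa using this
  have hmem : (φ y, φ y) ∈ W := by
    constructor
    · show (φ.symm (φ y), φ.symm (φ y)) ∈ interior (Dset φ ε)
      rwa [Homeomorph.symm_apply_apply]
    · show dist (φ y) (φ y) < (1 - lam) * ε
      rw [dist_self]
      have : lam < 1 := had.2.2.1
      nlinarith
  exact interior_maximal hWsub hWopen hmem

lemma back_ind (φ : X ≃ₜ X) {η lam ε : ℝ} (had : IsAdapted φ η lam)
    (hε : 0 < ε) (hεη : ε ≤ η) (x : X) :
    ∀ m : ℕ, (It φ (m : ℤ) x, It φ (m : ℤ) x) ∈ interior (Dset φ ε) →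
      (x, x) ∈ interior (Dset φ ε) := by
  intro m
  induction m with
  | zero => intro h; simpa [It_zero] using h
  | succ m ih =>
      intro h
      have h' := interior_pullback φ had hε hεη h
      have e : φ.symm (It φ ((m + 1 : ℕ) : ℤ) x) = It φ (m : ℤ) x := by
        rw [show ((m : ℤ)) = -1 + ((m + 1 : ℕ) : ℤ) by push_cast; ring, It_add, It_neg_one]
      rw [e] at h'
      exact ih h'

lemma fwd_ind (φ : X ≃ₜ X) {η lam ε : ℝ} (had : IsAdapted φ η lam)
    (hε : 0 < ε) (hεη : ε ≤ η) (x : X) :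
    ∀ m : ℕ, (It φ (-(m : ℤ)) x, It φ (-(m : ℤ)) x) ∈ interior (Dset φ ε) →
      (x, x) ∈ interior (Dset φ ε) := by
  intro m
  induction m with
  | zero => intro h; simpa [It_zero] using h
  | succ m ih =>
      intro h
      have h' := interior_pushforward φ had hε hεη h
      have e : φ (It φ (-((m + 1 : ℕ) : ℤ)) x) = It φ (-(m : ℤ)) x := by
        rw [show (-(m : ℤ)) = 1 + -((m + 1 : ℕ) : ℤ) by push_cast; ring, It_add, It_one]
      rw [e] at h'
      exact ih h'
/-- a point stably (or unstably, homoclinically, locally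
conjugately) equivalent to a synchronizing periodic point is synchronizing. -/
theorem eq_to_sync_periodic_implies_sync (φ : X ≃ₜ X) (εX η lam : ℝ)
    (hexp : IsExpansive φ εX) (had : IsAdapted φ η lam) (x p : X)
    (hp : IsPeriodic φ p) (hps : IsSyncPt φ (min η (εX / 2)) p) :
    (StableEq φ x p → IsSyncPt φ (min η (εX / 2)) x) ∧
    (UnstableEq φ x p → IsSyncPt φ (min η (εX / 2)) x) ∧
    (StableEq φ x p ∧ UnstableEq φ x p → IsSyncPt φ (min η (εX / 2)) x) ∧
    (LocConj φ x p → IsSyncPt φ (min η (εX / 2)) x) := by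
  obtain ⟨ε, hε, hεle, hint⟩ := hps
  have hεη : ε ≤ η := hεle.trans (min_le_left _ _)
  obtain ⟨r, hr1, hrp⟩ := hp
  have hrpos : (0:ℕ) < r := hr1
  -- iterated periodicity
  have hper : ∀ m : ℕ, It φ ((m * r : ℕ) : ℤ) p = p := by
    intro m
    induction m with
    | zero => simp [It_zero]
    | succ m ih =>
        have : (((m + 1) * r : ℕ) : ℤ) = ((m * r : ℕ) : ℤ) + (r : ℤ) := by push_cast; ring
        rw [this, It_add, hrp, ih]
  have hrpneg : It φ (-(r : ℤ)) p = p := by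
    have := congrArg (It φ (-(r : ℤ))) hrp
    rw [← It_add] at this
    simpa [It_zero] using this.symm
  have hperneg : ∀ m : ℕ, It φ (-((m * r : ℕ) : ℤ)) p = p := by
    intro m
    induction m with
    | zero => simp [It_zero]
    | succ m ih =>
        have : (-(((m + 1) * r : ℕ) : ℤ)) = (-((m * r : ℕ) : ℤ)) + (-(r : ℤ)) := by
          push_cast; ring
        rw [this, It_add, hrpneg, ih]
  have hmul : Tendsto (fun m : ℕ => m * r) atTop atTop :=
    tendsto_atTop_atTop.mpr fun b => ⟨b, fun a ha => ha.trans (Nat.le_mul_of_pos_right a hrpos)⟩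
  -- the diagonal set
  have hdgopen : IsOpen {z : X | (z, z) ∈ interior (Dset φ ε)} :=
    isOpen_interior.preimage (continuous_id.prodMk continuous_id)
  have hdgmem : p ∈ {z : X | (z, z) ∈ interior (Dset φ ε)} := hint
  have main_s : StableEq φ x p → IsSyncPt φ (min η (εX / 2)) x := by
    intro hse
    have hd : Tendsto (fun m : ℕ => dist (It φ ((m * r : ℕ) : ℤ) x) p) atTop (𝓝 0) := by
      have := hse.comp hmul
      simpa only [Function.comp_def, hper] using this
    have hlim : Tendsto (fun m : ℕ => It φ ((m * r : ℕ) : ℤ) x) atTop (𝓝 p) :=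
      tendsto_iff_dist_tendsto_zero.mpr hd
    obtain ⟨m, hm⟩ := (hlim.eventually (hdgopen.mem_nhds hdgmem)).exists
    exact ⟨ε, hε, hεle, back_ind φ had hε hεη x (m * r) hm⟩
  have main_u : UnstableEq φ x p → IsSyncPt φ (min η (εX / 2)) x := by
    intro hue
    have hd : Tendsto (fun m : ℕ => dist (It φ (-((m * r : ℕ) : ℤ)) x) p) atTop (𝓝 0) := by
      have := hue.comp hmul
      simpa only [Function.comp_def, hperneg] using this
    have hlim : Tendsto (fun m : ℕ => It φ (-((m * r : ℕ) : ℤ)) x) atTop (𝓝 p) :=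
      tendsto_iff_dist_tendsto_zero.mpr hd
    obtain ⟨m, hm⟩ := (hlim.eventually (hdgopen.mem_nhds hdgmem)).exists
    exact ⟨ε, hε, hεle, fwd_ind φ had hε hεη x (m * r) hm⟩
  refine ⟨main_s, main_u, fun h => main_s h.1, ?_⟩
  intro hlc
  obtain ⟨U, V, γ, γinv, hUo, hVo, hxU, hpV, hγx, -, -, -, -, -, -, hasym⟩ := hlc
  apply main_s
  show Tendsto (fun n : ℕ => dist (It φ n x) (It φ n p)) atTop (𝓝 0)
  rw [Metric.tendsto_atTop]
  intro δ hδ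
  obtain ⟨N, hN⟩ := hasym (δ / 2) (half_pos hδ)
  refine ⟨N, fun n hn => ?_⟩
  have habs : (N : ℤ) ≤ |(n : ℤ)| := by
    rw [Int.abs_natCast]; exact_mod_cast hn
  have := hN (n : ℤ) habs x hxU
  rw [hγx] at this
  rw [Real.dist_eq, sub_zero, abs_of_nonneg dist_nonneg]
  linarith
end Paper
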